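/- arXiv:2406.10153 — 4 statements merged into one kernel-verified Lean document; each statement's English description precedes it below -/
import Mathlib

section
/- Let Re > 0, f : [0,∞) → ℝ, and let U, R : [0,∞) × [0,∞) → ℝ (functions of (y,t)) be such that for each t ≥ 0: U(·,t) is twice continuously differentiable with U(0,t) = 0; ∂U/∂y(y,t) → 0 and y·(1 − U(y,t)) → 0 as y → ∞; R(·,t) is continuously differentiable with R(0,t) = 0 and R(y,t) → 0 as y → ∞; the functions y ↦ 1 − U(y,t), ∂U/∂t(·,t), ∂²U/∂y²(·,t), ∂R/∂y(·,t) and y ↦ y·∂U/∂y(y,t) are integrable on (0,∞); and the averaged momentum equation ∂U/∂t + ∂R/∂y = (1/Re)·∂²U/∂y² + f(t)·y·∂U/∂y holds for all (y,t). Suppose further that δ*(t) := ∫₀^∞ (1 − U(y,t)) dy is differentiable in t with dδ*/dt = −∫₀^∞ ∂U/∂t (y,t) dy (differentiation under the integral sign is valid). Then for all t ≥ 0, d/dt (1 − δ*(t)) = f(t)·δ*(t) − (1/Re)·∂U/∂y(0,t). -/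
open MeasureTheory Filter Set

/-- The displacement thickness evolution equation (equation (5) of the paper):
for the streamwise- and spanwise-averaged momentum equation
`∂U/∂t + ∂R/∂y = (1/Re) ∂²U/∂y² + f(t) y ∂U/∂y` with no-slip and far-field
decay conditions, the displacement thickness `δ*(t) = ∫₀^∞ (1 - U) dy`
satisfies `d/dt (1 - δ*) = f δ* - (1/Re) ∂U/∂y(0,t)`. -/
theorem displacement_thickness_evolution
    (Re : ℝ) (hRe : 0 < Re)
    (f : ℝ → ℝ) (U R : ℝ → ℝ → ℝ)
    (hU2 : ∀ t ≥ (0:ℝ), ContDiff ℝ 2 (fun y => U y t))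
    (hU0 : ∀ t ≥ (0:ℝ), U 0 t = 0)
    (hUy_lim : ∀ t ≥ (0:ℝ),
      Tendsto (fun y => deriv (fun y' => U y' t) y) atTop (nhds 0))
    (hU_decay : ∀ t ≥ (0:ℝ),
      Tendsto (fun y => y * (1 - U y t)) atTop (nhds 0))
    (hR1 : ∀ t ≥ (0:ℝ), ContDiff ℝ 1 (fun y => R y t))
    (hR0 : ∀ t ≥ (0:ℝ), R 0 t = 0)
    (hR_lim : ∀ t ≥ (0:ℝ), Tendsto (fun y => R y t) atTop (nhds 0))
    (hint1 : ∀ t ≥ (0:ℝ), IntegrableOn (fun y => 1 - U y t) (Ioi 0))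
    (hint2 : ∀ t ≥ (0:ℝ),
      IntegrableOn (fun y => deriv (fun s => U y s) t) (Ioi 0))
    (hint3 : ∀ t ≥ (0:ℝ),
      IntegrableOn (fun y => deriv (deriv (fun y' => U y' t)) y) (Ioi 0))
    (hint4 : ∀ t ≥ (0:ℝ),
      IntegrableOn (fun y => deriv (fun y' => R y' t) y) (Ioi 0))
    (hint5 : ∀ t ≥ (0:ℝ),
      IntegrableOn (fun y => y * deriv (fun y' => U y' t) y) (Ioi 0))
    (hpde : ∀ y ≥ (0:ℝ), ∀ t ≥ (0:ℝ),
      deriv (fun s => U y s) t + deriv (fun y' => R y' t) y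
        = (1/Re) * deriv (deriv (fun y' => U y' t)) y
          + f t * y * deriv (fun y' => U y' t) y)
    (hδderiv : ∀ t ≥ (0:ℝ),
      HasDerivAt (fun s => ∫ y in Ioi (0:ℝ), (1 - U y s))
        (-∫ y in Ioi (0:ℝ), deriv (fun s => U y s) t) t) :
    ∀ t ≥ (0:ℝ),
      deriv (fun s => 1 - ∫ y in Ioi (0:ℝ), (1 - U y s)) t
        = f t * (∫ y in Ioi (0:ℝ), (1 - U y t))
          - (1/Re) * deriv (fun y => U y t) 0 := by
  intro t ht
  -- abbreviations
  set V : ℝ → ℝ := fun y => U y t with hV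
  have hV2 : ContDiff ℝ 2 V := hU2 t ht
  have hVdiff : Differentiable ℝ V := hV2.differentiable (by norm_num)
  have hV1deriv : ContDiff ℝ 1 (deriv V) := by
    have := (contDiff_succ_iff_deriv (n := 1)).mp (by exact_mod_cast hV2)
    exact this.2.2
  -- Step A: LHS = ∫ ∂U/∂t
  have hA : deriv (fun s => 1 - ∫ y in Ioi (0:ℝ), (1 - U y s)) t
      = ∫ y in Ioi (0:ℝ), deriv (fun s => U y s) t := by
    have h := (hδderiv t ht).const_sub 1
    rw [h.deriv, neg_neg]
  -- Step B: ∫ U'' = - U'(0)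
  have hB : (∫ y in Ioi (0:ℝ), deriv (deriv V) y) = - deriv V 0 := by
    have := integral_Ioi_of_hasDerivAt_of_tendsto'
      (f := deriv V) (f' := deriv (deriv V)) (a := 0) (m := 0)
      (fun x _ => ((hV1deriv.differentiable one_ne_zero) x).hasDerivAt)
      (hint3 t ht) (hUy_lim t ht)
    rw [this, zero_sub]
  -- Step C: ∫ R' = 0
  have hC : (∫ y in Ioi (0:ℝ), deriv (fun y' => R y' t) y) = 0 := by
    have := integral_Ioi_of_hasDerivAt_of_tendsto'
      (f := fun y => R y t) (f' := fun y => deriv (fun y' => R y' t) y) (a := 0) (m := 0)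
      (fun x _ => (((hR1 t ht).differentiable one_ne_zero) x).hasDerivAt)
      (hint4 t ht) (hR_lim t ht)
    rw [this, zero_sub]
    simp [hR0 t ht]
  -- Step D: ∫ y U' = δ*
  have hD : (∫ y in Ioi (0:ℝ), y * deriv V y)
      = ∫ y in Ioi (0:ℝ), (1 - U y t) := by
    have hg : ∀ x ∈ Ici (0:ℝ), HasDerivAt (fun y => y * (V y - 1))
        (x * deriv V x - (1 - U x t)) x := by
      intro x _
      have h1 : HasDerivAt (fun y => V y - 1) (deriv V x) x :=
        ((hVdiff x).hasDerivAt).sub_const 1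
      have : HasDerivAt (fun y => y * (V y - 1)) (1 * (V x - 1) + x * deriv V x) x :=
        (hasDerivAt_id x).mul h1
      convert this using 1
      simp [hV]
      ring
    have hgint : IntegrableOn (fun x => x * deriv V x - (1 - U x t)) (Ioi 0) :=
      (hint5 t ht).sub (hint1 t ht)
    have hglim : Tendsto (fun y => y * (V y - 1)) atTop (nhds 0) := by
      have := (hU_decay t ht).neg
      rw [neg_zero] at this
      convert this using 2 with y
      ring
    have key := integral_Ioi_of_hasDerivAt_of_tendsto' hg hgint hglim
    rw [integral_sub (hint5 t ht) (hint1 t ht)] at key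
    simp at key
    linarith
  -- Step E: pointwise PDE rearrangement and splitting
  have hE : (∫ y in Ioi (0:ℝ), deriv (fun s => U y s) t)
      = ∫ y in Ioi (0:ℝ), ((1/Re) * deriv (deriv V) y
          + f t * (y * deriv V y) - deriv (fun y' => R y' t) y) := by
    apply setIntegral_congr_fun measurableSet_Ioi
    intro y hy
    have := hpde y (le_of_lt hy) t ht
    simp only []
    linarith [this]
  have h3 : IntegrableOn (fun y => 1/Re * deriv (deriv V) y) (Ioi 0) :=
    (hint3 t ht).const_mul _
  have h4 : IntegrableOn (fun y => f t * (y * deriv V y)) (Ioi 0) :=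
    (hint5 t ht).const_mul _
  have h34 : IntegrableOn (fun y => 1/Re * deriv (deriv V) y
      + f t * (y * deriv V y)) (Ioi 0) := h3.add h4
  rw [hA, hE, integral_sub h34 (hint4 t ht), integral_add h3 h4,
    integral_const_mul, integral_const_mul, hB, hC, hD]
  ring
end

section
/- Let Re > 0, f : [0,∞) → ℝ, and let U, R : [0,∞) × [0,∞) → ℝ (functions of (y,t)) be such that for each t ≥ 0: U(·,t) is twice continuously differentiable and bounded, with U(0,t) = 0 and U(y,t) → 1 as y → ∞; ∂U/∂y(y,t) → 0 and y·(1 − U(y,t)) → 0 as y → ∞; R(·,t) is continuously differentiable with R(0,t) = 0 and R(y,t) → 0 as y → ∞; the functions y ↦ 1 − U, y ↦ U(1−U), ∂U/∂t, (1−2U)·∂U/∂t, (∂U/∂y)², R·∂U/∂y, U·∂²U/∂y², U·∂R/∂y, y·∂U/∂y and y·U·∂U/∂y are integrable on (0,∞); and the averaged momentum equation ∂U/∂t + ∂R/∂y = (1/Re)·∂²U/∂y² + f(t)·y·∂U/∂y holds for all (y,t). Suppose further that θ(t) := ∫₀^∞ U(y,t)(1 − U(y,t)) dy is differentiable in t with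 dθ/dt = ∫₀^∞ (1 − 2U(y,t))·∂U/∂t(y,t) dy (differentiation under the integral sign is valid). Then for all t ≥ 0, dθ/dt = −f(t)·θ(t) − (1/Re)·∂U/∂y(0,t) + (2/Re)·∫₀^∞ (∂U/∂y)² dy − 2·∫₀^∞ R·(∂U/∂y) dy. -/
open MeasureTheory Filter Set

/-- The momentum thickness evolution equation (equation (8) of the paper):
for the streamwise- and spanwise-averaged momentum equation
`∂U/∂t + ∂R/∂y = (1/Re) ∂²U/∂y² + f(t) y ∂U/∂y` with no-slip and far-field
conditions, the momentum thickness `θ(t) = ∫₀^∞ U (1 - U) dy` satisfies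
`dθ/dt = -f θ - (1/Re) ∂U/∂y(0,t) + (2/Re) ∫ (∂U/∂y)² - 2 ∫ R ∂U/∂y`. -/
theorem momentum_thickness_evolution
    (Re : ℝ) (hRe : 0 < Re)
    (f : ℝ → ℝ) (U R : ℝ → ℝ → ℝ)
    (hU2 : ∀ t ≥ (0:ℝ), ContDiff ℝ 2 (fun y => U y t))
    (hUbdd : ∀ t ≥ (0:ℝ), ∃ M : ℝ, ∀ y : ℝ, |U y t| ≤ M)
    (hU0 : ∀ t ≥ (0:ℝ), U 0 t = 0)
    (hU_lim : ∀ t ≥ (0:ℝ), Tendsto (fun y => U y t) atTop (nhds 1))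
    (hUy_lim : ∀ t ≥ (0:ℝ),
      Tendsto (fun y => deriv (fun y' => U y' t) y) atTop (nhds 0))
    (hU_decay : ∀ t ≥ (0:ℝ),
      Tendsto (fun y => y * (1 - U y t)) atTop (nhds 0))
    (hR1 : ∀ t ≥ (0:ℝ), ContDiff ℝ 1 (fun y => R y t))
    (hR0 : ∀ t ≥ (0:ℝ), R 0 t = 0)
    (hR_lim : ∀ t ≥ (0:ℝ), Tendsto (fun y => R y t) atTop (nhds 0))
    (hint1 : ∀ t ≥ (0:ℝ), IntegrableOn (fun y => 1 - U y t) (Ioi 0))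
    (hint2 : ∀ t ≥ (0:ℝ), IntegrableOn (fun y => U y t * (1 - U y t)) (Ioi 0))
    (hint3 : ∀ t ≥ (0:ℝ),
      IntegrableOn (fun y => deriv (fun s => U y s) t) (Ioi 0))
    (hint4 : ∀ t ≥ (0:ℝ),
      IntegrableOn (fun y => (1 - 2 * U y t) * deriv (fun s => U y s) t) (Ioi 0))
    (hint5 : ∀ t ≥ (0:ℝ),
      IntegrableOn (fun y => (deriv (fun y' => U y' t) y) ^ 2) (Ioi 0))
    (hint6 : ∀ t ≥ (0:ℝ),
      IntegrableOn (fun y => R y t * deriv (fun y' => U y' t) y) (Ioi 0))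
    (hint7 : ∀ t ≥ (0:ℝ),
      IntegrableOn (fun y => U y t * deriv (deriv (fun y' => U y' t)) y) (Ioi 0))
    (hint8 : ∀ t ≥ (0:ℝ),
      IntegrableOn (fun y => U y t * deriv (fun y' => R y' t) y) (Ioi 0))
    (hint9 : ∀ t ≥ (0:ℝ),
      IntegrableOn (fun y => y * deriv (fun y' => U y' t) y) (Ioi 0))
    (hint10 : ∀ t ≥ (0:ℝ),
      IntegrableOn (fun y => y * U y t * deriv (fun y' => U y' t) y) (Ioi 0))
    (hpde : ∀ y ≥ (0:ℝ), ∀ t ≥ (0:ℝ),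
      deriv (fun s => U y s) t + deriv (fun y' => R y' t) y
        = (1/Re) * deriv (deriv (fun y' => U y' t)) y
          + f t * y * deriv (fun y' => U y' t) y)
    (hθderiv : ∀ t ≥ (0:ℝ),
      HasDerivAt (fun s => ∫ y in Ioi (0:ℝ), U y s * (1 - U y s))
        (∫ y in Ioi (0:ℝ), (1 - 2 * U y t) * deriv (fun s => U y s) t) t) :
    ∀ t ≥ (0:ℝ),
      deriv (fun s => ∫ y in Ioi (0:ℝ), U y s * (1 - U y s)) t
        = -f t * (∫ y in Ioi (0:ℝ), U y t * (1 - U y t))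
          - (1/Re) * deriv (fun y => U y t) 0
          + (2/Re) * (∫ y in Ioi (0:ℝ), (deriv (fun y' => U y' t) y) ^ 2)
          - 2 * (∫ y in Ioi (0:ℝ), R y t * deriv (fun y' => U y' t) y) := by
  intro t ht
  -- smoothness facts
  have hu2 : ContDiff ℝ 2 (fun y => U y t) := hU2 t ht
  have hu2' : ContDiff ℝ (1+1) (fun y => U y t) := by exact_mod_cast hu2
  have hudiff : Differentiable ℝ (fun y => U y t) := hu2.differentiable (by norm_num)
  have hu'cd : ContDiff ℝ 1 (deriv (fun y => U y t)) := (contDiff_succ_iff_deriv.mp hu2').2.2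
  have hu'diff : Differentiable ℝ (deriv (fun y => U y t)) := hu'cd.differentiable one_ne_zero
  have hrdiff : Differentiable ℝ (fun y => R y t) := (hR1 t ht).differentiable one_ne_zero
  -- HasDerivAt facts
  have hdu : ∀ y : ℝ, HasDerivAt (fun y' => U y' t) (deriv (fun y' => U y' t) y) y :=
    fun y => (hudiff y).hasDerivAt
  have hddu : ∀ y : ℝ,
      HasDerivAt (deriv (fun y' => U y' t)) (deriv (deriv (fun y' => U y' t)) y) y :=
    fun y => (hu'diff y).hasDerivAt
  have hdr : ∀ y : ℝ, HasDerivAt (fun y' => R y' t) (deriv (fun y' => R y' t) y) y :=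
    fun y => (hrdiff y).hasDerivAt
  -- limits
  have hulim : Tendsto (fun y => U y t) atTop (nhds 1) := hU_lim t ht
  have hu'lim : Tendsto (fun y => deriv (fun y' => U y' t) y) atTop (nhds 0) := hUy_lim t ht
  have hrlim : Tendsto (fun y => R y t) atTop (nhds 0) := hR_lim t ht
  -- Integral 1 : ∫ (∂tU - f t * y * u') = - (1/Re) * u'(0)
  have hG1eq : ∀ y ∈ Ioi (0:ℝ),
      deriv (fun s => U y s) t - f t * y * deriv (fun y' => U y' t) y
        = (1/Re) * deriv (deriv (fun y' => U y' t)) y - deriv (fun y' => R y' t) y := by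
    intro y hy
    have := hpde y (le_of_lt hy) t ht
    linarith
  have hG1int : IntegrableOn
      (fun y => deriv (fun s => U y s) t - f t * y * deriv (fun y' => U y' t) y) (Ioi 0) := by
    have h9 : IntegrableOn (fun y => f t * (y * deriv (fun y' => U y' t) y)) (Ioi 0) :=
      (hint9 t ht).const_mul (f t)
    have h39 : IntegrableOn
        (fun y => deriv (fun s => U y s) t - f t * (y * deriv (fun y' => U y' t) y))
        (Ioi 0) := (hint3 t ht).sub h9
    exact h39.congr_fun (fun y _ => by ring) measurableSet_Ioi
  have hI1 : ∫ y in Ioi (0:ℝ),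
      (deriv (fun s => U y s) t - f t * y * deriv (fun y' => U y' t) y)
        = - ((1/Re) * deriv (fun y => U y t) 0) := by
    have hF : ∀ y ∈ Ici (0:ℝ),
        HasDerivAt (fun y' => (1/Re) * deriv (fun y'' => U y'' t) y' - R y' t)
          ((1/Re) * deriv (deriv (fun y' => U y' t)) y - deriv (fun y' => R y' t) y) y := by
      intro y _
      exact ((hddu y).const_mul (1/Re)).sub (hdr y)
    have hFlim : Tendsto (fun y' => (1/Re) * deriv (fun y'' => U y'' t) y' - R y' t)
        atTop (nhds 0) := by
      have := (hu'lim.const_mul (1/Re)).sub hrlim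
      simpa using this
    have hint : IntegrableOn
        (fun y => (1/Re) * deriv (deriv (fun y' => U y' t)) y - deriv (fun y' => R y' t) y)
        (Ioi 0) := hG1int.congr_fun hG1eq measurableSet_Ioi
    have key := integral_Ioi_of_hasDerivAt_of_tendsto' hF hint hFlim
    rw [setIntegral_congr_fun measurableSet_Ioi hG1eq, key, hR0 t ht]
    ring
  -- Integral 2 : ∫ (u'^2 + u * u'') = 0
  have hI2 : ∫ y in Ioi (0:ℝ),
      ((deriv (fun y' => U y' t) y) ^ 2 + U y t * deriv (deriv (fun y' => U y' t)) y) = 0 := by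
    have hF : ∀ y ∈ Ici (0:ℝ),
        HasDerivAt (fun y' => U y' t * deriv (fun y'' => U y'' t) y')
          ((deriv (fun y' => U y' t) y) ^ 2 + U y t * deriv (deriv (fun y' => U y' t)) y) y := by
      intro y _
      have : HasDerivAt (fun y' => U y' t * deriv (fun y'' => U y'' t) y') _ y :=
        (hdu y).mul (hddu y)
      convert this using 1
      ring
    have hFlim : Tendsto (fun y' => U y' t * deriv (fun y'' => U y'' t) y')
        atTop (nhds 0) := by
      have := hulim.mul hu'lim
      simpa using this
    have hint : IntegrableOn
        (fun y => (deriv (fun y' => U y' t) y) ^ 2 + U y t * deriv (deriv (fun y' => U y' t)) y)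
        (Ioi 0) := (hint5 t ht).add (hint7 t ht)
    have key := integral_Ioi_of_hasDerivAt_of_tendsto' hF hint hFlim
    rw [key, hU0 t ht]
    ring
  -- Integral 3 : ∫ (r * u' + u * r') = 0
  have hI3 : ∫ y in Ioi (0:ℝ),
      (R y t * deriv (fun y' => U y' t) y + U y t * deriv (fun y' => R y' t) y) = 0 := by
    have hF : ∀ y ∈ Ici (0:ℝ),
        HasDerivAt (fun y' => U y' t * R y' t)
          (R y t * deriv (fun y' => U y' t) y + U y t * deriv (fun y' => R y' t) y) y := by
      intro y _
      have : HasDerivAt (fun y' => U y' t * R y' t) _ y := (hdu y).mul (hdr y)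
      convert this using 1
      ring
    have hFlim : Tendsto (fun y' => U y' t * R y' t) atTop (nhds 0) := by
      have := hulim.mul hrlim
      simpa using this
    have hint : IntegrableOn
        (fun y => R y t * deriv (fun y' => U y' t) y + U y t * deriv (fun y' => R y' t) y)
        (Ioi 0) := (hint6 t ht).add (hint8 t ht)
    have key := integral_Ioi_of_hasDerivAt_of_tendsto' hF hint hFlim
    rw [key, hU0 t ht]
    ring
  -- Integral 4 : ∫ (u(1-u) + (y u' - 2 (y u u'))) = 0
  have h9m10 : IntegrableOn
      (fun y => y * deriv (fun y' => U y' t) y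
        - 2 * (y * U y t * deriv (fun y' => U y' t) y)) (Ioi 0) :=
    (hint9 t ht).sub ((hint10 t ht).const_mul 2)
  have hI4 : ∫ y in Ioi (0:ℝ),
      (U y t * (1 - U y t) + (y * deriv (fun y' => U y' t) y
        - 2 * (y * U y t * deriv (fun y' => U y' t) y))) = 0 := by
    have hF : ∀ y ∈ Ici (0:ℝ),
        HasDerivAt (fun y' => y' * (U y' t * (1 - U y' t)))
          (U y t * (1 - U y t) + (y * deriv (fun y' => U y' t) y
            - 2 * (y * U y t * deriv (fun y' => U y' t) y))) y := by
      intro y _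
      have h1 : HasDerivAt (fun y' => U y' t * (1 - U y' t))
          (deriv (fun y' => U y' t) y * (1 - U y t)
            + U y t * (0 - deriv (fun y' => U y' t) y)) y :=
        (hdu y).mul ((hasDerivAt_const y (1:ℝ)).sub (hdu y))
      have : HasDerivAt (fun y' => y' * (U y' t * (1 - U y' t))) _ y :=
        (hasDerivAt_id y).mul h1
      convert this using 1
      simp only [id_eq]
      ring
    have hFlim : Tendsto (fun y' => y' * (U y' t * (1 - U y' t))) atTop (nhds 0) := by
      have h := hulim.mul (hU_decay t ht)
      simp only [mul_zero] at h
      refine h.congr (fun y => ?_)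
      ring
    have hint : IntegrableOn
        (fun y => U y t * (1 - U y t) + (y * deriv (fun y' => U y' t) y
          - 2 * (y * U y t * deriv (fun y' => U y' t) y))) (Ioi 0) :=
      (hint2 t ht).add h9m10
    have key := integral_Ioi_of_hasDerivAt_of_tendsto' hF hint hFlim
    rw [key]
    ring
  -- consequences of the FTC identities
  have e2 : ∫ y in Ioi (0:ℝ), U y t * deriv (deriv (fun y' => U y' t)) y
      = - ∫ y in Ioi (0:ℝ), (deriv (fun y' => U y' t) y) ^ 2 := by
    have h := integral_add (hint5 t ht) (hint7 t ht)
    rw [hI2] at h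
    linarith
  have e3 : ∫ y in Ioi (0:ℝ), U y t * deriv (fun y' => R y' t) y
      = - ∫ y in Ioi (0:ℝ), R y t * deriv (fun y' => U y' t) y := by
    have h := integral_add (hint6 t ht) (hint8 t ht)
    rw [hI3] at h
    linarith
  have e4 : ∫ y in Ioi (0:ℝ), (y * deriv (fun y' => U y' t) y
      - 2 * (y * U y t * deriv (fun y' => U y' t) y))
      = - ∫ y in Ioi (0:ℝ), U y t * (1 - U y t) := by
    have h := integral_add (hint2 t ht) h9m10
    rw [hI4] at h
    linarith
  -- value of the derivative
  have hderiv_val :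
      deriv (fun s => ∫ y in Ioi (0:ℝ), U y s * (1 - U y s)) t
        = ∫ y in Ioi (0:ℝ), (1 - 2 * U y t) * deriv (fun s => U y s) t :=
    (hθderiv t ht).deriv
  rw [hderiv_val]
  -- decompose the integrand
  have hsplit : ∀ y ∈ Ioi (0:ℝ),
      (1 - 2 * U y t) * deriv (fun s => U y s) t
        = (deriv (fun s => U y s) t - f t * y * deriv (fun y' => U y' t) y)
            - (2/Re) * (U y t * deriv (deriv (fun y' => U y' t)) y)
          + 2 * (U y t * deriv (fun y' => R y' t) y)
          + f t * (y * deriv (fun y' => U y' t) y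
            - 2 * (y * U y t * deriv (fun y' => U y' t) y)) := by
    intro y hy
    have hp := hpde y (le_of_lt hy) t ht
    have hd : deriv (fun s => U y s) t
        = (1/Re) * deriv (deriv (fun y' => U y' t)) y
          + f t * y * deriv (fun y' => U y' t) y
          - deriv (fun y' => R y' t) y := by linarith
    rw [hd]
    field_simp
    ring
  rw [setIntegral_congr_fun measurableSet_Ioi hsplit]
  -- integrability of pieces
  have h7c : IntegrableOn
      (fun y => (2/Re) * (U y t * deriv (deriv (fun y' => U y' t)) y)) (Ioi 0) :=
    (hint7 t ht).const_mul (2/Re)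
  have hA : IntegrableOn
      (fun y => (deriv (fun s => U y s) t - f t * y * deriv (fun y' => U y' t) y)
        - (2/Re) * (U y t * deriv (deriv (fun y' => U y' t)) y)) (Ioi 0) :=
    hG1int.sub h7c
  have hB : IntegrableOn (fun y => 2 * (U y t * deriv (fun y' => R y' t) y)) (Ioi 0) :=
    (hint8 t ht).const_mul 2
  have hAB : IntegrableOn
      (fun y => (deriv (fun s => U y s) t - f t * y * deriv (fun y' => U y' t) y)
        - (2/Re) * (U y t * deriv (deriv (fun y' => U y' t)) y)
        + 2 * (U y t * deriv (fun y' => R y' t) y)) (Ioi 0) := hA.add hB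
  have hC : IntegrableOn
      (fun y => f t * (y * deriv (fun y' => U y' t) y
        - 2 * (y * U y t * deriv (fun y' => U y' t) y))) (Ioi 0) :=
    h9m10.const_mul (f t)
  rw [integral_add hAB hC, integral_add hA hB, integral_sub hG1int h7c,
    integral_const_mul, integral_const_mul, integral_const_mul, hI1, e2, e3, e4]
  ring
end

section
/- Let ψ : [0,∞) → ℝ be differentiable such that ψ², y ↦ y²·ψ'(y)², and y ↦ y·ψ(y)·ψ'(y) are integrable on (0,∞), and y·ψ(y)² → 0 as y → ∞. Let p, q, r : [0,∞) → ℝ be square-integrable functions such that p·ψ and y ↦ y·p(y)·ψ'(y) are integrable. Then 1 − (1/2)·( ∫₀^∞ (p − ψ)² + ∫₀^∞ q² + ∫₀^∞ r² ) + ( ∫₀^∞ p² + ∫₀^∞ q² + ∫₀^∞ r² ) + 2·∫₀^∞ y·p·ψ' dy = 1 + (1/2)·( ∫₀^∞ q² + ∫₀^∞ r² ) + (1/2)·∫₀^∞ p² − (1/2)·∫₀^∞ ψ² + ∫₀^∞ p·(ψ + 2yψ') dy ≥ 1 + (1/2)·( ∫₀^∞ q² + ∫₀^∞ r² ) − 2·∫₀^∞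 y²·ψ'² dy ≥ 1 − 2·∫₀^∞ y²·ψ'² dy. -/
open MeasureTheory Filter Set

/-- The lower-bound chain (equations (16)–(17) of the paper) on the coefficient
multiplying the skin friction `C_f(t)` in the proof of Theorem 1, with `p, q, r`
playing the roles of the perturbation velocity components `v_x, v_y, v_z`. -/
theorem skin_friction_coefficient_bound_chain
    (ψ : ℝ → ℝ) (hψdiff : Differentiable ℝ ψ)
    (hψ1 : IntegrableOn (fun y => (ψ y) ^ 2) (Ioi 0))
    (hψ2 : IntegrableOn (fun y => y ^ 2 * (deriv ψ y) ^ 2) (Ioi 0))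
    (hψ3 : IntegrableOn (fun y => y * ψ y * deriv ψ y) (Ioi 0))
    (hψlim : Tendsto (fun y => y * (ψ y) ^ 2) atTop (nhds 0))
    (p q r : ℝ → ℝ)
    (hp : IntegrableOn (fun y => (p y) ^ 2) (Ioi 0))
    (hq : IntegrableOn (fun y => (q y) ^ 2) (Ioi 0))
    (hr : IntegrableOn (fun y => (r y) ^ 2) (Ioi 0))
    (hpψ : IntegrableOn (fun y => p y * ψ y) (Ioi 0))
    (hpψ' : IntegrableOn (fun y => y * p y * deriv ψ y) (Ioi 0)) :
    (1 - (1/2) * ((∫ y in Ioi (0:ℝ), (p y - ψ y) ^ 2)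
                  + (∫ y in Ioi (0:ℝ), (q y) ^ 2)
                  + (∫ y in Ioi (0:ℝ), (r y) ^ 2))
       + ((∫ y in Ioi (0:ℝ), (p y) ^ 2)
          + (∫ y in Ioi (0:ℝ), (q y) ^ 2)
          + (∫ y in Ioi (0:ℝ), (r y) ^ 2))
       + 2 * (∫ y in Ioi (0:ℝ), y * p y * deriv ψ y)
      = 1 + (1/2) * ((∫ y in Ioi (0:ℝ), (q y) ^ 2)
                      + (∫ y in Ioi (0:ℝ), (r y) ^ 2))
          + (1/2) * (∫ y in Ioi (0:ℝ), (p y) ^ 2)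
          - (1/2) * (∫ y in Ioi (0:ℝ), (ψ y) ^ 2)
          + (∫ y in Ioi (0:ℝ), p y * (ψ y + 2 * y * deriv ψ y)))
    ∧ (1 + (1/2) * ((∫ y in Ioi (0:ℝ), (q y) ^ 2)
                      + (∫ y in Ioi (0:ℝ), (r y) ^ 2))
          + (1/2) * (∫ y in Ioi (0:ℝ), (p y) ^ 2)
          - (1/2) * (∫ y in Ioi (0:ℝ), (ψ y) ^ 2)
          + (∫ y in Ioi (0:ℝ), p y * (ψ y + 2 * y * deriv ψ y))
        ≥ 1 + (1/2) * ((∫ y in Ioi (0:ℝ), (q y) ^ 2)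
                        + (∫ y in Ioi (0:ℝ), (r y) ^ 2))
            - 2 * (∫ y in Ioi (0:ℝ), y ^ 2 * (deriv ψ y) ^ 2))
    ∧ (1 + (1/2) * ((∫ y in Ioi (0:ℝ), (q y) ^ 2)
                        + (∫ y in Ioi (0:ℝ), (r y) ^ 2))
            - 2 * (∫ y in Ioi (0:ℝ), y ^ 2 * (deriv ψ y) ^ 2)
        ≥ 1 - 2 * (∫ y in Ioi (0:ℝ), y ^ 2 * (deriv ψ y) ^ 2)) := by

  have hA : (∫ y in Ioi (0:ℝ), (p y - ψ y) ^ 2)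
      = (∫ y in Ioi (0:ℝ), (p y) ^ 2) - 2 * (∫ y in Ioi (0:ℝ), p y * ψ y)
        + (∫ y in Ioi (0:ℝ), (ψ y) ^ 2) := by
    have h1 : (∫ y in Ioi (0:ℝ), (p y - ψ y) ^ 2)
        = ∫ y in Ioi (0:ℝ), (((p y) ^ 2 + (ψ y) ^ 2) - (2:ℝ) * (p y * ψ y)) := by
      congr 1; funext y; ring
    have h2 : (∫ y in Ioi (0:ℝ), (((p y) ^ 2 + (ψ y) ^ 2) - (2:ℝ) * (p y * ψ y)))
        = (∫ y in Ioi (0:ℝ), ((p y) ^ 2 + (ψ y) ^ 2))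
          - ∫ y in Ioi (0:ℝ), (2:ℝ) * (p y * ψ y) :=
      integral_sub (hp.add hψ1) (hpψ.const_mul 2)
    have h3 : (∫ y in Ioi (0:ℝ), ((p y) ^ 2 + (ψ y) ^ 2))
        = (∫ y in Ioi (0:ℝ), (p y) ^ 2) + ∫ y in Ioi (0:ℝ), (ψ y) ^ 2 :=
      integral_add hp hψ1
    have h4 : (∫ y in Ioi (0:ℝ), (2:ℝ) * (p y * ψ y))
        = 2 * ∫ y in Ioi (0:ℝ), p y * ψ y := integral_const_mul 2 _
    rw [h1, h2, h3, h4]; ring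
  have hpcomb : IntegrableOn (fun y => p y * (ψ y + 2 * y * deriv ψ y)) (Ioi (0:ℝ)) := by
    have h : (fun y => p y * ψ y + (2:ℝ) * (y * p y * deriv ψ y))
        = fun y => p y * (ψ y + 2 * y * deriv ψ y) := by funext y; ring
    exact h ▸ (hpψ.add (hpψ'.const_mul 2))
  have hB : (∫ y in Ioi (0:ℝ), p y * (ψ y + 2 * y * deriv ψ y))
      = (∫ y in Ioi (0:ℝ), p y * ψ y) + 2 * (∫ y in Ioi (0:ℝ), y * p y * deriv ψ y) := by
    have h1 : (∫ y in Ioi (0:ℝ), p y * (ψ y + 2 * y * deriv ψ y))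
        = ∫ y in Ioi (0:ℝ), (p y * ψ y + (2:ℝ) * (y * p y * deriv ψ y)) := by
      congr 1; funext y; ring
    have h2 : (∫ y in Ioi (0:ℝ), (p y * ψ y + (2:ℝ) * (y * p y * deriv ψ y)))
        = (∫ y in Ioi (0:ℝ), p y * ψ y)
          + ∫ y in Ioi (0:ℝ), (2:ℝ) * (y * p y * deriv ψ y) :=
      integral_add hpψ (hpψ'.const_mul 2)
    have h3 : (∫ y in Ioi (0:ℝ), (2:ℝ) * (y * p y * deriv ψ y))
        = 2 * ∫ y in Ioi (0:ℝ), y * p y * deriv ψ y := integral_const_mul 2 _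
    rw [h1, h2, h3]
  -- integration by parts : ∫ y ψ ψ' = -(1/2) ∫ ψ²
  have hintI : IntegrableOn (fun y => (ψ y) ^ 2 / 2 + y * ψ y * deriv ψ y) (Ioi (0:ℝ)) :=
    (hψ1.div_const 2).add hψ3
  have hC : (∫ y in Ioi (0:ℝ), y * ψ y * deriv ψ y)
      = -(1/2) * (∫ y in Ioi (0:ℝ), (ψ y) ^ 2) := by
    have hderiv : ∀ x ∈ Ioi (0:ℝ), HasDerivAt (fun y => y * (ψ y) ^ 2 / 2)
        ((ψ x) ^ 2 / 2 + x * ψ x * deriv ψ x) x := by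
      intro x _
      have hψx : HasDerivAt ψ (deriv ψ x) x := (hψdiff x).hasDerivAt
      have h1 : HasDerivAt (fun y => y * (ψ y) ^ 2)
          (1 * (ψ x) ^ 2 + x * (2 * ψ x * deriv ψ x)) x := by
        have hsq : HasDerivAt (fun y => (ψ y) ^ 2) (2 * ψ x * deriv ψ x) x := by
          have := hψx.fun_pow 2
          simpa [mul_comm, mul_assoc, mul_left_comm] using this
        exact (hasDerivAt_id x).mul hsq
      have h2 : HasDerivAt (fun y => y * (ψ y) ^ 2 / 2)
          ((1 * (ψ x) ^ 2 + x * (2 * ψ x * deriv ψ x)) / 2) x := h1.div_const 2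
      convert h2 using 1
      ring
    have hcont : ContinuousWithinAt (fun y => y * (ψ y) ^ 2 / 2) (Ici (0:ℝ)) 0 :=
      ((continuous_id.mul (hψdiff.continuous.pow 2)).div_const 2).continuousWithinAt
    have hlim : Tendsto (fun y => y * (ψ y) ^ 2 / 2) atTop (nhds 0) := by
      simpa using hψlim.div_const 2
    have key := integral_Ioi_of_hasDerivAt_of_tendsto hcont hderiv hintI hlim
    simp only [mul_zero, zero_mul, zero_div, sub_zero] at key
    have h2 : (∫ y in Ioi (0:ℝ), ((ψ y) ^ 2 / 2 + y * ψ y * deriv ψ y))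
        = (∫ y in Ioi (0:ℝ), (ψ y) ^ 2 / 2) + ∫ y in Ioi (0:ℝ), y * ψ y * deriv ψ y :=
      integral_add (hψ1.div_const 2) hψ3
    have h3 : (∫ y in Ioi (0:ℝ), (ψ y) ^ 2 / 2)
        = (∫ y in Ioi (0:ℝ), (ψ y) ^ 2) / 2 := integral_div 2 _
    rw [h2, h3] at key
    linarith
  -- ∫ (ψ + 2yψ')² = 4∫ y²ψ'² - ∫ψ²
  have hsqswap : (fun y => (ψ y) ^ 2 + ((4:ℝ) * (y * ψ y * deriv ψ y)
        + (4:ℝ) * (y ^ 2 * (deriv ψ y) ^ 2)))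
      = fun y => (ψ y + 2 * y * deriv ψ y) ^ 2 := by funext y; ring
  have hsqint : IntegrableOn (fun y => (ψ y + 2 * y * deriv ψ y) ^ 2) (Ioi (0:ℝ)) :=
    hsqswap ▸ (hψ1.add ((hψ3.const_mul 4).add (hψ2.const_mul 4)))
  have hD : (∫ y in Ioi (0:ℝ), (ψ y + 2 * y * deriv ψ y) ^ 2)
      = 4 * (∫ y in Ioi (0:ℝ), y ^ 2 * (deriv ψ y) ^ 2)
        - (∫ y in Ioi (0:ℝ), (ψ y) ^ 2) := by
    have h1 : (∫ y in Ioi (0:ℝ), (ψ y + 2 * y * deriv ψ y) ^ 2)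
        = ∫ y in Ioi (0:ℝ), ((ψ y) ^ 2 + ((4:ℝ) * (y * ψ y * deriv ψ y)
            + (4:ℝ) * (y ^ 2 * (deriv ψ y) ^ 2))) := by rw [hsqswap]
    have h2 : (∫ y in Ioi (0:ℝ), ((ψ y) ^ 2 + ((4:ℝ) * (y * ψ y * deriv ψ y)
            + (4:ℝ) * (y ^ 2 * (deriv ψ y) ^ 2))))
        = (∫ y in Ioi (0:ℝ), (ψ y) ^ 2)
          + ∫ y in Ioi (0:ℝ), ((4:ℝ) * (y * ψ y * deriv ψ y)
              + (4:ℝ) * (y ^ 2 * (deriv ψ y) ^ 2)) :=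
      integral_add hψ1 ((hψ3.const_mul 4).add (hψ2.const_mul 4))
    have h3 : (∫ y in Ioi (0:ℝ), ((4:ℝ) * (y * ψ y * deriv ψ y)
              + (4:ℝ) * (y ^ 2 * (deriv ψ y) ^ 2)))
        = (∫ y in Ioi (0:ℝ), (4:ℝ) * (y * ψ y * deriv ψ y))
          + ∫ y in Ioi (0:ℝ), (4:ℝ) * (y ^ 2 * (deriv ψ y) ^ 2) :=
      integral_add (hψ3.const_mul 4) (hψ2.const_mul 4)
    have h4 : (∫ y in Ioi (0:ℝ), (4:ℝ) * (y * ψ y * deriv ψ y))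
        = 4 * ∫ y in Ioi (0:ℝ), y * ψ y * deriv ψ y := integral_const_mul 4 _
    have h5 : (∫ y in Ioi (0:ℝ), (4:ℝ) * (y ^ 2 * (deriv ψ y) ^ 2))
        = 4 * ∫ y in Ioi (0:ℝ), y ^ 2 * (deriv ψ y) ^ 2 := integral_const_mul 4 _
    rw [h1, h2, h3, h4, h5, hC]; ring
  -- Young's inequality for the cross term
  have hE : (∫ y in Ioi (0:ℝ), p y * (ψ y + 2 * y * deriv ψ y))
      ≥ -((1/2) * (∫ y in Ioi (0:ℝ), (p y) ^ 2)
          + (1/2) * (∫ y in Ioi (0:ℝ), (ψ y + 2 * y * deriv ψ y) ^ 2)) := by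
    have hintL : IntegrableOn
        (fun y => -((1/2) * (p y) ^ 2 + (1/2) * (ψ y + 2 * y * deriv ψ y) ^ 2))
        (Ioi (0:ℝ)) := ((hp.const_mul (1/2)).add (hsqint.const_mul (1/2))).neg
    have hmono : (∫ y in Ioi (0:ℝ),
          (-((1/2) * (p y) ^ 2 + (1/2) * (ψ y + 2 * y * deriv ψ y) ^ 2)))
        ≤ ∫ y in Ioi (0:ℝ), p y * (ψ y + 2 * y * deriv ψ y) := by
      apply integral_mono hintL hpcomb
      intro y
      simp only [Pi.neg_apply, Pi.add_apply]
      nlinarith [sq_nonneg (p y + (ψ y + 2 * y * deriv ψ y))]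
    have h1 : (∫ y in Ioi (0:ℝ),
          (-((1/2) * (p y) ^ 2 + (1/2) * (ψ y + 2 * y * deriv ψ y) ^ 2)))
        = -((∫ y in Ioi (0:ℝ), (1/2) * (p y) ^ 2)
            + ∫ y in Ioi (0:ℝ), (1/2) * (ψ y + 2 * y * deriv ψ y) ^ 2) := by
      rw [integral_neg, integral_add (hp.const_mul (1/2)) (hsqint.const_mul (1/2))]
    have h2 : (∫ y in Ioi (0:ℝ), (1/2:ℝ) * (p y) ^ 2)
        = (1/2) * ∫ y in Ioi (0:ℝ), (p y) ^ 2 := integral_const_mul _ _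
    have h3 : (∫ y in Ioi (0:ℝ), (1/2:ℝ) * (ψ y + 2 * y * deriv ψ y) ^ 2)
        = (1/2) * ∫ y in Ioi (0:ℝ), (ψ y + 2 * y * deriv ψ y) ^ 2 := integral_const_mul _ _
    rw [h1, h2, h3] at hmono
    linarith
  have hqnn : (0:ℝ) ≤ ∫ y in Ioi (0:ℝ), (q y) ^ 2 :=
    integral_nonneg fun y => sq_nonneg _
  have hrnn : (0:ℝ) ≤ ∫ y in Ioi (0:ℝ), (r y) ^ 2 :=
    integral_nonneg fun y => sq_nonneg _
  exact ⟨by rw [hA, hB]; ring, by linarith, by linarith⟩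
end

section
/- Let a > 0 and ψ(y) = e^{−ay} for y ≥ 0. Let g, h : [0,∞) → ℝ be differentiable with g(0) = h(0) = 0 and square-integrable derivatives g', h' on (0,∞), such that g(y) = ∫₀^y g'(s) ds and h(y) = ∫₀^y h'(s) ds for all y ≥ 0. Then (1/a)·( ∫₀^∞ g'(y)² dy + ∫₀^∞ h'(y)² dy ) − 2·∫₀^∞ g(y)·h(y)·ψ'(y) dy ≥ 0. -/
open MeasureTheory Filter Set

lemma aux_sq_intervalIntegral_le (f : ℝ → ℝ) (hmeas : Measurable f)
    (hA : IntegrableOn (fun s => f s ^ 2) (Ioi 0)) {y : ℝ} (hy : 0 < y) :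
    (∫ s in (0:ℝ)..y, f s) ^ 2 ≤ y * ∫ s in Ioi (0:ℝ), f s ^ 2 := by
  set A := ∫ s in Ioi (0:ℝ), f s ^ 2 with hAdef
  have hA0 : 0 ≤ A := setIntegral_nonneg measurableSet_Ioi (fun _ _ => sq_nonneg _)
  have hsub : Ioc (0:ℝ) y ⊆ Ioi 0 := Ioc_subset_Ioi_self
  have hA2 : IntegrableOn (fun s => f s ^ 2) (Ioc 0 y) := hA.mono_set hsub
  have hconst : ∀ c : ℝ, IntegrableOn (fun _ : ℝ => c) (Ioc 0 y) := fun c =>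
    integrableOn_const measure_Ioc_lt_top.ne
  have hfint : IntegrableOn f (Ioc 0 y) := by
    refine Integrable.mono' (g := fun s => (f s ^ 2 + 1) / 2) ?_ hmeas.aestronglyMeasurable ?_
    · exact (hA2.add (hconst 1)).div_const 2
    · filter_upwards with s
      rw [Real.norm_eq_abs]
      nlinarith [sq_nonneg (|f s| - 1), sq_abs (f s)]
  have hIoc2 : ∫ s in Ioc (0:ℝ) y, f s ^ 2 ≤ A := by
    refine setIntegral_mono_set hA ?_ (HasSubset.Subset.eventuallyLE hsub)
    filter_upwards with s using sq_nonneg _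
  set I := ∫ s in Ioc (0:ℝ) y, |f s| with hIdef
  have hI0 : 0 ≤ I := setIntegral_nonneg measurableSet_Ioc (fun _ _ => abs_nonneg _)
  have h1 : |∫ s in (0:ℝ)..y, f s| ≤ I := by
    rw [intervalIntegral.integral_of_le hy.le, hIdef]
    simpa [Real.norm_eq_abs] using
      norm_integral_le_integral_norm (μ := volume.restrict (Ioc (0:ℝ) y)) f
  have key : ∀ l : ℝ, 0 < l → I ≤ A / (2 * l) + l * y / 2 := by
    intro l hl
    have hb : I ≤ ∫ s in Ioc (0:ℝ) y, (f s ^ 2 / (2 * l) + l / 2) := by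
      refine setIntegral_mono_on hfint.abs ((hA2.div_const _).add (hconst _))
        measurableSet_Ioc (fun s _ => ?_)
      rw [div_add' _ _ _ (by positivity), le_div_iff₀ (by positivity)]
      nlinarith [sq_nonneg (|f s| - l), sq_abs (f s)]
    have heq : ∫ s in Ioc (0:ℝ) y, (f s ^ 2 / (2 * l) + l / 2)
        = (∫ s in Ioc (0:ℝ) y, f s ^ 2) / (2 * l) + l / 2 * y := by
      rw [integral_add (hA2.div_const _) (hconst _), integral_div, setIntegral_const,
        measureReal_def, Real.volume_Ioc, sub_zero, ENNReal.toReal_ofReal hy.le, smul_eq_mul]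
      ring
    have hdiv : (∫ s in Ioc (0:ℝ) y, f s ^ 2) / (2 * l) ≤ A / (2 * l) :=
      div_le_div_of_nonneg_right hIoc2 (by positivity) |>.trans_eq rfl
    calc I ≤ _ := hb
      _ = _ := heq
      _ ≤ A / (2 * l) + l * y / 2 := by linarith [hdiv]
  rcases eq_or_lt_of_le hA0 with hA0' | hApos
  · have hIle : I ≤ 0 := by
      refine le_of_forall_pos_le_add (fun eps heps => ?_)
      have hl : (0:ℝ) < 2 * eps / y := by positivity
      have := key (2 * eps / y) hl
      rw [← hA0'] at this
      calc I ≤ 0 / (2 * (2 * eps / y)) + (2 * eps / y) * y / 2 := this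
        _ = 0 + eps := by field_simp; ring
    have hI : I = 0 := le_antisymm hIle hI0
    have : |∫ s in (0:ℝ)..y, f s| ≤ 0 := hI ▸ h1
    have h0 : (∫ s in (0:ℝ)..y, f s) = 0 := abs_eq_zero.mp (le_antisymm this (abs_nonneg _))
    rw [h0, ← hA0']
    simp
  · set l := Real.sqrt (A / y) with hldef
    have hlpos : 0 < l := Real.sqrt_pos.2 (by positivity)
    have hlsq : l ^ 2 = A / y := Real.sq_sqrt (by positivity)
    have hly : l ^ 2 * y = A := by rw [hlsq]; field_simp
    have hkey := key l hlpos
    have hsq : (∫ s in (0:ℝ)..y, f s) ^ 2 ≤ I ^ 2 := by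
      have := sq_abs (∫ s in (0:ℝ)..y, f s)
      nlinarith [abs_nonneg (∫ s in (0:ℝ)..y, f s)]
    have hval : (A / (2 * l) + l * y / 2) ^ 2 = y * A := by
      rw [← hly]; field_simp; ring
    have hIsq : I ^ 2 ≤ (A / (2 * l) + l * y / 2) ^ 2 := pow_le_pow_left₀ hI0 hkey 2
    linarith [hval ▸ hIsq]

/-- A one-dimensional analogue of the spectral constraint `Q_ψ(v) ≥ 0`
verified in the proof of Theorem 1 for the exponential background profile
`ψ(y) = e^{-a y}`. -/
theorem spectral_constraint_exponential
    (a : ℝ) (ha : 0 < a)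
    (g h : ℝ → ℝ) (hgdiff : Differentiable ℝ g) (hhdiff : Differentiable ℝ h)
    (hg0 : g 0 = 0) (hh0 : h 0 = 0)
    (hg' : IntegrableOn (fun y => (deriv g y) ^ 2) (Ioi 0))
    (hh' : IntegrableOn (fun y => (deriv h y) ^ 2) (Ioi 0))
    (hgftc : ∀ y ≥ (0:ℝ), g y = ∫ s in (0:ℝ)..y, deriv g s)
    (hhftc : ∀ y ≥ (0:ℝ), h y = ∫ s in (0:ℝ)..y, deriv h s) :
    (1/a) * ((∫ y in Ioi (0:ℝ), (deriv g y) ^ 2)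
              + (∫ y in Ioi (0:ℝ), (deriv h y) ^ 2))
      - 2 * (∫ y in Ioi (0:ℝ),
          g y * h y * deriv (fun y' => Real.exp (-a * y')) y) ≥ 0 := by
  have hpsi : ∀ y : ℝ, deriv (fun y' => Real.exp (-a * y')) y = -a * Real.exp (-a * y) := by
    intro y
    have hd : HasDerivAt (fun y' : ℝ => Real.exp (-a * y')) (Real.exp (-a * y) * (-a)) y := by
      simpa using ((hasDerivAt_id y).const_mul (-a)).exp
    rw [hd.deriv]; ring
  simp only [hpsi]
  set A := ∫ y in Ioi (0:ℝ), (deriv g y) ^ 2 with hAdef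
  set B := ∫ y in Ioi (0:ℝ), (deriv h y) ^ 2 with hBdef
  have hA0 : 0 ≤ A := setIntegral_nonneg measurableSet_Ioi (fun _ _ => sq_nonneg _)
  have hB0 : 0 ≤ B := setIntegral_nonneg measurableSet_Ioi (fun _ _ => sq_nonneg _)
  -- pointwise bounds
  have hgy : ∀ y ∈ Ioi (0:ℝ), (g y) ^ 2 ≤ y * A := fun y hy => by
    rw [hgftc y (le_of_lt hy)]
    exact aux_sq_intervalIntegral_le (deriv g) (measurable_deriv g) hg' hy
  have hhy : ∀ y ∈ Ioi (0:ℝ), (h y) ^ 2 ≤ y * B := fun y hy => by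
    rw [hhftc y (le_of_lt hy)]
    exact aux_sq_intervalIntegral_le (deriv h) (measurable_deriv h) hh' hy
  -- integrability and value of the dominating function
  have hMint : IntegrableOn (fun y : ℝ => y * Real.exp (-(a * y))) (Ioi 0) := by
    have := integrableOn_rpow_mul_exp_neg_mul_rpow (s := 1) (p := 1)
      (by norm_num : (-1:ℝ) < 1) zero_lt_one ha
    simpa [Real.rpow_one] using this
  have hMval : ∫ y in Ioi (0:ℝ), y * Real.exp (-(a * y)) = 1 / a ^ 2 := by
    have h2 := Real.integral_rpow_mul_exp_neg_mul_Ioi (a := 2) (r := a) two_pos ha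
    have h21 : (2:ℝ) - 1 = 1 := by norm_num
    rw [h21] at h2
    simp only [Real.rpow_one, Real.Gamma_two, mul_one] at h2
    rw [h2, show ((2:ℝ)) = ((2:ℕ):ℝ) by norm_num, Real.rpow_natCast, div_pow, one_pow]
  -- pointwise domination
  have hbound : ∀ y ∈ Ioi (0:ℝ),
      ‖g y * h y * (-a * Real.exp (-a * y))‖
        ≤ (a * (A + B) / 2) * (y * Real.exp (-(a * y))) := by
    intro y hy
    have hy0 : 0 < y := hy
    have hG := hgy y hy
    have hH := hhy y hy
    have hexp : 0 < Real.exp (-a * y) := Real.exp_pos _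
    have h2gh : 2 * (|g y| * |h y|) ≤ y * A + y * B := by
      nlinarith [sq_nonneg (|g y| - |h y|), sq_abs (g y), sq_abs (h y)]
    have : ‖g y * h y * (-a * Real.exp (-a * y))‖
        = (|g y| * |h y|) * (a * Real.exp (-a * y)) := by
      rw [Real.norm_eq_abs, abs_mul, abs_mul, abs_mul, abs_neg, abs_of_pos ha,
        abs_of_pos hexp]
    rw [this, show -(a * y) = -a * y by ring]
    nlinarith [mul_pos ha hexp]
  have hcont : Continuous fun y => g y * h y * (-a * Real.exp (-a * y)) := by
    exact (hgdiff.continuous.mul hhdiff.continuous).mul (by fun_prop)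
  have hMint' : IntegrableOn
      (fun y : ℝ => (a * (A + B) / 2) * (y * Real.exp (-(a * y)))) (Ioi 0) :=
    hMint.const_mul _
  have hbound_ae : ∀ᵐ y ∂(volume.restrict (Ioi (0:ℝ))),
      ‖g y * h y * (-a * Real.exp (-a * y))‖
        ≤ (a * (A + B) / 2) * (y * Real.exp (-(a * y))) :=
    (ae_restrict_iff' measurableSet_Ioi).2 (Eventually.of_forall hbound)
  have habs : ‖∫ y in Ioi (0:ℝ), g y * h y * (-a * Real.exp (-a * y))‖
      ≤ ∫ y in Ioi (0:ℝ), (a * (A + B) / 2) * (y * Real.exp (-(a * y))) :=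
    norm_integral_le_of_norm_le hMint' hbound_ae
  have hval : ∫ y in Ioi (0:ℝ), (a * (A + B) / 2) * (y * Real.exp (-(a * y)))
      = (A + B) / (2 * a) := by
    rw [integral_const_mul, hMval]
    field_simp
  rw [hval, Real.norm_eq_abs] at habs
  have := abs_le.mp habs
  rw [ge_iff_le, sub_nonneg]
  have haineq : (A + B) / (2 * a) = (1 / a) * (A + B) / 2 := by
    field_simp
  linarith [this.2]
end
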